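/- For the complete graph K_n on n ≥ 1 vertices with Kirchhoff (Laplacian) matrix K, the number of rooted spanning forests is det(1 + K) = (n+1)^{n−1}, where 1 denotes the n×n identity matrix. -/

import Mathlib

open Matrix

instance completeGraphAdjDecidable (n : ℕ) :
    DecidableRel (SimpleGraph.completeGraph (Fin n)).Adj :=
  fun a b => inferInstanceAs (Decidable (a ≠ b))

/-- For the complete graph on `n ≥ 1` vertices with Kirchhoff (Laplacian)
matrix `K`, the number of rooted spanning forests is
`det(1 + K) = (n + 1)^(n - 1)`. -/
theorem complete_graph_forest_count
    (n : ℕ) (hn : 1 ≤ n) :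
    (1 + (SimpleGraph.completeGraph (Fin n)).lapMatrix ℝ).det = (n + 1 : ℝ) ^ (n - 1) := by
  have hpos : (0:ℝ) < (n:ℝ) + 1 := by positivity
  set u : Fin n → ℝ := fun _ => -((n:ℝ)+1)⁻¹ with hu
  set v : Fin n → ℝ := fun _ => 1 with hv
  have h : (1 : Matrix (Fin n) (Fin n) ℝ) + (SimpleGraph.completeGraph (Fin n)).lapMatrix ℝ
      = ((n:ℝ) + 1) • ((1 : Matrix (Fin n) (Fin n) ℝ) + replicateCol Unit u * replicateRow Unit v) := by
    ext i j
    by_cases hij : i = j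
    · subst hij
      simp [SimpleGraph.lapMatrix, SimpleGraph.degMatrix, Matrix.one_apply,
        Matrix.mul_apply, hu, hv]
      field_simp
      push_cast [Nat.cast_sub hn]
      ring
    · simp [SimpleGraph.lapMatrix, SimpleGraph.degMatrix, Matrix.one_apply, hij,
        Matrix.mul_apply, Ne.symm hij, hu, hv]
      field_simp
  rw [h, det_smul, det_one_add_replicateCol_mul_replicateRow]
  simp [dotProduct, hu, hv]
  have h1 : 1 + -((n:ℝ) * ((n:ℝ)+1)⁻¹) = ((n:ℝ)+1)⁻¹ := by field_simp; ring
  have hpow : ((n:ℝ)+1) ^ (n-1) * ((n:ℝ)+1) = ((n:ℝ)+1) ^ n := by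
    rw [← pow_succ, Nat.sub_add_cancel hn]
  rw [h1, ← hpow, mul_assoc, mul_inv_cancel₀ hpos.ne', mul_one]
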